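/- Let θ = (θ_1,…,θ_5) ∈ ℝ⁵ with θ_i ≥ 0 for all i and θ_1 + θ_2 + θ_3 + θ_4 + θ_5 < π, and let ℓ ∈ {1,…,5} be an index with Σ_{i≠ℓ} θ_i ≥ π/2. Define θ' ∈ ℝ⁵ by θ'_i = θ_i for i ≠ ℓ and θ'_ℓ = π − Σ_{i≠ℓ} θ_i. Then: (i) θ_ℓ < θ'_ℓ ≤ π/2; (ii) θ'_1 + ⋯ + θ'_5 = π; (iii) S(θ')_{i,i+2} ≤ S(θ)_{i,i+2} for every i (indices cyclic modulo 5); (iv) S(θ')_{i,i+1} = S(θ)_{i,i+1} for every i ≠ ℓ; and (v) S(θ')_{ℓ,ℓ+1} ≤ 0. -/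

import Mathlib

open Real

noncomputable def Smat (θ : Fin 5 → ℝ) : Matrix (Fin 5) (Fin 5) ℝ :=
  !![1,                    -cos (θ 0),           cos (θ 0 + θ 1),      cos (θ 3 + θ 4),      -cos (θ 4);
     -cos (θ 0),           1,                    -cos (θ 1),           cos (θ 1 + θ 2),      cos (θ 4 + θ 0);
     cos (θ 0 + θ 1),      -cos (θ 1),           1,                    -cos (θ 2),           cos (θ 2 + θ 3);
     cos (θ 3 + θ 4),      cos (θ 1 + θ 2),      -cos (θ 2),           1,                    -cos (θ 3);
     -cos (θ 4),           cos (θ 4 + θ 0),      cos (θ 2 + θ 3),      -cos (θ 3),           1]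

lemma cosmono (a b c : ℝ) (ha : 0 ≤ a) (hc : 0 ≤ c) (hab : a ≤ b) (hb : b + c ≤ π) :
    cos (b + c) ≤ cos (a + c) :=
  Real.cos_le_cos_of_nonneg_of_le_pi (by linarith) hb (by linarith)

lemma cosmono' (a b c : ℝ) (ha : 0 ≤ a) (hc : 0 ≤ c) (hab : a ≤ b) (hb : c + b ≤ π) :
    cos (c + b) ≤ cos (c + a) := by
  rw [add_comm c b, add_comm c a]; exact cosmono a b c ha hc hab (by linarith)

lemma S02 (θ : Fin 5 → ℝ) : Smat θ 0 2 = cos (θ 0 + θ 1) := by simp [Smat]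
lemma S13 (θ : Fin 5 → ℝ) : Smat θ 1 3 = cos (θ 1 + θ 2) := by simp [Smat]
lemma S24 (θ : Fin 5 → ℝ) : Smat θ 2 4 = cos (θ 2 + θ 3) := by simp [Smat]
lemma S30 (θ : Fin 5 → ℝ) : Smat θ 3 0 = cos (θ 3 + θ 4) := by simp [Smat]
lemma S41 (θ : Fin 5 → ℝ) : Smat θ 4 1 = cos (θ 4 + θ 0) := by simp [Smat]
lemma S01 (θ : Fin 5 → ℝ) : Smat θ 0 1 = -cos (θ 0) := by simp [Smat]
lemma S12 (θ : Fin 5 → ℝ) : Smat θ 1 2 = -cos (θ 1) := by simp [Smat]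
lemma S23 (θ : Fin 5 → ℝ) : Smat θ 2 3 = -cos (θ 2) := by simp [Smat]
lemma S34 (θ : Fin 5 → ℝ) : Smat θ 3 4 = -cos (θ 3) := by simp [Smat]
lemma S40 (θ : Fin 5 → ℝ) : Smat θ 4 0 = -cos (θ 4) := by simp [Smat]

lemma f02 : (0:Fin 5) + 2 = 2 := rfl
lemma f12 : (1:Fin 5) + 2 = 3 := rfl
lemma f22 : (2:Fin 5) + 2 = 4 := rfl
lemma f32 : (3:Fin 5) + 2 = 0 := rfl
lemma f42 : (4:Fin 5) + 2 = 1 := rfl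
lemma f01 : (0:Fin 5) + 1 = 1 := rfl
lemma f11 : (1:Fin 5) + 1 = 2 := rfl
lemma f21 : (2:Fin 5) + 1 = 3 := rfl
lemma f31 : (3:Fin 5) + 1 = 4 := rfl
lemma f41 : (4:Fin 5) + 1 = 0 := rfl

lemma fin5cases (i : Fin 5) : i = 0 ∨ i = 1 ∨ i = 2 ∨ i = 3 ∨ i = 4 := by
  revert i; decide

set_option maxHeartbeats 1000000 in
theorem Smat_update_theta (θ : Fin 5 → ℝ) (hθ : ∀ i, 0 ≤ θ i)
    (hsum : θ 0 + θ 1 + θ 2 + θ 3 + θ 4 < π) (ℓ : Fin 5)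
    (hℓ : π / 2 ≤ ∑ i ∈ Finset.univ.erase ℓ, θ i)
    (θ' : Fin 5 → ℝ)
    (hθ' : θ' = Function.update θ ℓ (π - ∑ i ∈ Finset.univ.erase ℓ, θ i)) :
    (θ ℓ < θ' ℓ) ∧ (θ' ℓ ≤ π / 2) ∧
    (∑ i, θ' i = π) ∧
    (∀ i : Fin 5, Smat θ' i (i + 2) ≤ Smat θ i (i + 2)) ∧
    (∀ i : Fin 5, i ≠ ℓ → Smat θ' i (i + 1) = Smat θ i (i + 1)) ∧
    (Smat θ' ℓ (ℓ + 1) ≤ 0) := by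
  subst hθ'
  have h0 := hθ 0; have h1 := hθ 1; have h2 := hθ 2; have h3 := hθ 3; have h4 := hθ 4
  have hp := Real.pi_pos
  obtain ⟨v, hv⟩ : ∃ v : ℝ, v = π - ∑ i ∈ Finset.univ.erase ℓ, θ i := ⟨_, rfl⟩
  rw [← hv]
  rw [Finset.sum_erase_eq_sub (Finset.mem_univ ℓ), Fin.sum_univ_five] at hℓ
  have hveq : v = π - (θ 0 + θ 1 + θ 2 + θ 3 + θ 4 - θ ℓ) := by
    rw [hv, Finset.sum_erase_eq_sub (Finset.mem_univ ℓ), Fin.sum_univ_five]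
  have hhalf : v ≤ π / 2 := by rw [hveq]; linarith
  clear hv
  refine ⟨?_, ?_, ?_, ?_, ?_, ?_⟩
  · rw [Function.update_self, hveq]; linarith
  · rw [Function.update_self]; exact hhalf
  · rw [Fin.sum_univ_five]
    rcases fin5cases ℓ with rfl | rfl | rfl | rfl | rfl <;>
      simp only [hveq] at * <;> simp [Function.update_apply] <;> ring
  · intro i
    rcases fin5cases ℓ with rfl | rfl | rfl | rfl | rfl <;>
      rcases fin5cases i with rfl | rfl | rfl | rfl | rfl <;>
      simp only [f02, f12, f22, f32, f42, S02, S13, S24, S30, S41] <;>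
      simp [Function.update_apply] <;>
      (apply Real.cos_le_cos_of_nonneg_of_le_pi <;> linarith)
  · intro i hi
    rcases fin5cases ℓ with rfl | rfl | rfl | rfl | rfl <;>
      rcases fin5cases i with rfl | rfl | rfl | rfl | rfl <;>
      first
        | exact absurd rfl hi
        | (simp only [f01, f11, f21, f31, f41, S01, S12, S23, S34, S40] <;>
           simp [Function.update_apply])
  · rcases fin5cases ℓ with rfl | rfl | rfl | rfl | rfl <;>
      simp only [f01, f11, f21, f31, f41, S01, S12, S23, S34, S40, Function.update_self,
        neg_nonpos] <;>
      (refine Real.cos_nonneg_of_mem_Icc ⟨?_, hhalf⟩; rw [hveq]; linarith)
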